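/- For every t > 0 and every compact set K ⊆ ℝ^d, the union ⋃_{x∈K} I(x,t) of the sets of Hopf-Lax maximizers over x ∈ K is a compact subset of ℝ^d. (Lemma 6.1(a).) -/

import Mathlib

open Set Metric

noncomputable section

/-- `g(z) = c·(z₁⋯z_d)^{1/(d+1)}` (used only for `z ≥ 0`, where the product is `≥ 0`). -/
def gfun (c : ℝ) (d : ℕ) (z : Fin d → ℝ) : ℝ := c * (∏ i, z i) ^ (((d : ℝ) + 1)⁻¹)

/-- The set of values over which the Hopf-Lax supremum is taken. -/
def hlSet (c : ℝ) (d : ℕ) (u0 : (Fin d → ℝ) → ℝ) (x : Fin d → ℝ) (t : ℝ) : Set ℝ :=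
  (fun y => u0 y + t * gfun c d (t⁻¹ • (x - y))) '' {y | y ≤ x}

/-- The Hopf-Lax function `u(x,t)`, with `u(x,0) = u₀(x)`. -/
def hlu (c : ℝ) (d : ℕ) (u0 : (Fin d → ℝ) → ℝ) (x : Fin d → ℝ) (t : ℝ) : ℝ :=
  if t = 0 then u0 x else sSup (hlSet c d u0 x t)

/-- The set `I(x,t)` of maximizers in the Hopf-Lax formula. -/
def hlI (c : ℝ) (d : ℕ) (u0 : (Fin d → ℝ) → ℝ) (x : Fin d → ℝ) (t : ℝ) :
    Set (Fin d → ℝ) :=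
  {y | y ≤ x ∧ hlu c d u0 x t = u0 y + t * gfun c d (t⁻¹ • (x - y))}

/-- The decay condition at `−∞`:
for every `b`, `lim_{M→∞} sup { |y|_∞^{-d/(d+1)} u₀(y) : y ≤ b, |y|_∞ ≥ M } = −∞`. -/
def DecayCond (d : ℕ) (u0 : (Fin d → ℝ) → ℝ) : Prop :=
  ∀ b : Fin d → ℝ, ∀ C : ℝ, ∃ M : ℝ, 0 < M ∧ ∀ y : Fin d → ℝ, y ≤ b → M ≤ ‖y‖ →
    u0 y ≤ -C * ‖y‖ ^ ((d : ℝ) / ((d : ℝ) + 1))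

lemma tg_le {d : ℕ} {c t : ℝ} (ht : 0 < t) (hc : 0 < c) {x y : Fin d → ℝ} (hy : y ≤ x) :
    t * gfun c d (t⁻¹ • (x - y)) ≤
      (c * t * t⁻¹ ^ ((d : ℝ) / ((d : ℝ) + 1))) * ‖x - y‖ ^ ((d : ℝ) / ((d : ℝ) + 1)) := by
  set q : ℝ := (d : ℝ) / ((d : ℝ) + 1) with hqdef
  set p : ℝ := ((d : ℝ) + 1)⁻¹ with hpdef
  have hp : 0 < p := by positivity
  have hqp : q = (d : ℝ) * p := by rw [hqdef, hpdef, div_eq_mul_inv]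
  set w : Fin d → ℝ := x - y with hwdef
  have hw : ∀ i, 0 ≤ w i := fun i => sub_nonneg.2 (hy i)
  have hwle : ∀ i, w i ≤ ‖w‖ := fun i =>
    (le_abs_self _).trans ((Real.norm_eq_abs _) ▸ norm_le_pi_norm w i)
  have hti : (0:ℝ) ≤ t⁻¹ := inv_nonneg.2 ht.le
  have h0 : 0 ≤ ∏ i, (t⁻¹ • w) i := by
    apply Finset.prod_nonneg
    intro i _
    simp only [Pi.smul_apply, smul_eq_mul]
    exact mul_nonneg hti (hw i)
  have h1 : ∏ i, (t⁻¹ • w) i ≤ (t⁻¹ * ‖w‖) ^ d := by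
    have := Finset.prod_le_prod (s := Finset.univ)
      (f := fun i => (t⁻¹ • w) i) (g := fun _ => t⁻¹ * ‖w‖)
      (fun i _ => by
        simp only [Pi.smul_apply, smul_eq_mul]
        exact mul_nonneg hti (hw i))
      (fun i _ => by
        simp only [Pi.smul_apply, smul_eq_mul]
        exact mul_le_mul_of_nonneg_left (hwle i) hti)
    simpa using this
  have hbase : (0:ℝ) ≤ t⁻¹ * ‖w‖ := mul_nonneg hti (norm_nonneg _)
  have h2 : (∏ i, (t⁻¹ • w) i) ^ p ≤ ((t⁻¹ * ‖w‖) ^ d : ℝ) ^ p :=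
    Real.rpow_le_rpow h0 h1 hp.le
  have h3 : (((t⁻¹ * ‖w‖) ^ d : ℝ)) ^ p = t⁻¹ ^ q * ‖w‖ ^ q := by
    rw [← Real.rpow_natCast (t⁻¹ * ‖w‖) d, ← Real.rpow_mul hbase, ← hqp,
      Real.mul_rpow hti (norm_nonneg _)]
  have hg : gfun c d (t⁻¹ • w) ≤ c * (t⁻¹ ^ q * ‖w‖ ^ q) := by
    unfold gfun
    exact mul_le_mul_of_nonneg_left (h3 ▸ h2) hc.le
  calc t * gfun c d (t⁻¹ • w) ≤ t * (c * (t⁻¹ ^ q * ‖w‖ ^ q)) :=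
        mul_le_mul_of_nonneg_left hg ht.le
    _ = (c * t * t⁻¹ ^ q) * ‖w‖ ^ q := by ring

lemma key_bound {d : ℕ} {c t : ℝ} (ht : 0 < t) (hc : 0 < c) (u0 : (Fin d → ℝ) → ℝ)
    {x y : Fin d → ℝ} (hy : y ≤ x) (hxn : ‖x‖ ≤ ‖y‖) (h1 : 1 ≤ ‖y‖) {C : ℝ}
    (hu : u0 y ≤ -C * ‖y‖ ^ ((d : ℝ) / ((d : ℝ) + 1))) :
    u0 y + t * gfun c d (t⁻¹ • (x - y)) ≤
      (2 * (c * t * t⁻¹ ^ ((d : ℝ) / ((d : ℝ) + 1))) - C) * ‖y‖ ^ ((d : ℝ) / ((d : ℝ) + 1)) := by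
  set q : ℝ := (d : ℝ) / ((d : ℝ) + 1) with hqdef
  have hq0 : 0 ≤ q := by positivity
  have hq1 : q ≤ 1 := by
    rw [hqdef, div_le_one (by positivity)]; linarith
  set A : ℝ := c * t * t⁻¹ ^ q with hAdef
  have hA : 0 ≤ A := by
    apply mul_nonneg (mul_nonneg hc.le ht.le) (Real.rpow_nonneg (inv_nonneg.2 ht.le) q)
  have htg : t * gfun c d (t⁻¹ • (x - y)) ≤ A * ‖x - y‖ ^ q := tg_le ht hc hy
  have h2 : ‖x - y‖ ≤ 2 * ‖y‖ := (norm_sub_le _ _).trans (by linarith)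
  have h3 : ‖x - y‖ ^ q ≤ (2 * ‖y‖) ^ q := Real.rpow_le_rpow (norm_nonneg _) h2 hq0
  have h4 : ((2 : ℝ) * ‖y‖) ^ q = 2 ^ q * ‖y‖ ^ q := Real.mul_rpow (by norm_num) (norm_nonneg _)
  have h5 : (2 : ℝ) ^ q ≤ 2 := by
    calc (2:ℝ) ^ q ≤ (2:ℝ) ^ (1:ℝ) := Real.rpow_le_rpow_of_exponent_le one_le_two hq1
      _ = 2 := Real.rpow_one 2
  have hyq : 0 ≤ ‖y‖ ^ q := Real.rpow_nonneg (norm_nonneg _) q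
  have hA1 : A * ‖x - y‖ ^ q ≤ A * (2 ^ q * ‖y‖ ^ q) :=
    mul_le_mul_of_nonneg_left (h4 ▸ h3) hA
  have hA2 : A * (2 ^ q * ‖y‖ ^ q) ≤ A * (2 * ‖y‖ ^ q) :=
    mul_le_mul_of_nonneg_left (mul_le_mul_of_nonneg_right h5 hyq) hA
  have hexp : (2 * A - C) * ‖y‖ ^ q = A * (2 * ‖y‖ ^ q) + -C * ‖y‖ ^ q := by ring
  rw [hexp]
  linarith

lemma bddAbove_hlSet {d : ℕ} {c t : ℝ} (hc : 0 < c) (ht : 0 < t)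
    {u0 : (Fin d → ℝ) → ℝ} (hmono : Monotone u0) (hdecay : DecayCond d u0)
    (x : Fin d → ℝ) : BddAbove (hlSet c d u0 x t) := by
  set q : ℝ := (d : ℝ) / ((d : ℝ) + 1) with hqdef
  have hq0 : 0 ≤ q := by positivity
  set A : ℝ := c * t * t⁻¹ ^ q with hAdef
  have hA : 0 ≤ A :=
    mul_nonneg (mul_nonneg hc.le ht.le) (Real.rpow_nonneg (inv_nonneg.2 ht.le) q)
  obtain ⟨M, hM0, hM⟩ := hdecay x (2 * A + 1)
  set M₁ : ℝ := max (max M ‖x‖) 1 with hM₁def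
  refine ⟨max 0 (u0 x + A * (‖x‖ + M₁) ^ q), ?_⟩
  rintro v ⟨y, hy, rfl⟩
  simp only [mem_setOf_eq] at hy
  by_cases hcase : ‖y‖ ≤ M₁
  · have htg : t * gfun c d (t⁻¹ • (x - y)) ≤ A * ‖x - y‖ ^ q := tg_le ht hc hy
    have h1 : ‖x - y‖ ≤ ‖x‖ + M₁ := (norm_sub_le _ _).trans (by linarith)
    have h2 : ‖x - y‖ ^ q ≤ (‖x‖ + M₁) ^ q := Real.rpow_le_rpow (norm_nonneg _) h1 hq0
    have h3 : A * ‖x - y‖ ^ q ≤ A * (‖x‖ + M₁) ^ q := mul_le_mul_of_nonneg_left h2 hA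
    have h4 : u0 y ≤ u0 x := hmono hy
    have : u0 y + t * gfun c d (t⁻¹ • (x - y)) ≤ u0 x + A * (‖x‖ + M₁) ^ q := by linarith
    exact this.trans (le_max_right _ _)
  · push_neg at hcase
    have hMy : M ≤ ‖y‖ := le_of_lt (lt_of_le_of_lt (le_trans (le_max_left _ _) (le_max_left _ _)) hcase)
    have hxn : ‖x‖ ≤ ‖y‖ := le_of_lt (lt_of_le_of_lt (le_trans (le_max_right _ _) (le_max_left _ _)) hcase)
    have h1y : 1 ≤ ‖y‖ := le_of_lt (lt_of_le_of_lt (le_max_right _ _) hcase)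
    have hu := hM y hy hMy
    have hkey := key_bound ht hc u0 hy hxn h1y hu
    have hyq : 0 ≤ ‖y‖ ^ q := Real.rpow_nonneg (norm_nonneg _) q
    have : (2 * A - (2 * A + 1)) * ‖y‖ ^ q ≤ 0 := by nlinarith
    exact le_trans (hkey.trans this) (le_max_left _ _)

lemma mem_hlI_iff {d : ℕ} {c t : ℝ} (ht : t ≠ 0) {u0 : (Fin d → ℝ) → ℝ}
    {x y : Fin d → ℝ} (hbdd : BddAbove (hlSet c d u0 x t)) :
    y ∈ hlI c d u0 x t ↔ y ≤ x ∧ ∀ z, z ≤ x →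
      u0 z + t * gfun c d (t⁻¹ • (x - z)) ≤ u0 y + t * gfun c d (t⁻¹ • (x - y)) := by
  unfold hlI
  simp only [mem_setOf_eq, hlu, if_neg ht]
  constructor
  · rintro ⟨hy, heq⟩
    refine ⟨hy, fun z hz => ?_⟩
    rw [← heq]
    exact le_csSup hbdd ⟨z, hz, rfl⟩
  · rintro ⟨hy, hmax⟩
    refine ⟨hy, IsGreatest.csSup_eq ⟨⟨y, hy, rfl⟩, ?_⟩⟩
    rintro v ⟨z, hz, rfl⟩
    exact hmax z hz

lemma gfun_continuous (c : ℝ) (d : ℕ) : Continuous (gfun c d) := by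
  unfold gfun
  apply Continuous.mul continuous_const
  apply Continuous.rpow_const (continuous_finset_prod _ fun i _ => continuous_apply i)
  intro z
  right
  positivity


/-- Lemma 6.1(a): for `t > 0` and compact `K ⊆ ℝ^d`, the union of the sets of
Hopf-Lax maximizers `⋃_{x∈K} I(x,t)` is compact. -/
theorem compact_union_of_maximizers
    (d : ℕ) (hd : 1 ≤ d) (c : ℝ) (hc : 0 < c)
    (u0 : (Fin d → ℝ) → ℝ) (hmono : Monotone u0) (hlip : LocallyLipschitz u0)
    (hdecay : DecayCond d u0)
    (t : ℝ) (ht : 0 < t) (K : Set (Fin d → ℝ)) (hK : IsCompact K) :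
    IsCompact (⋃ x ∈ K, hlI c d u0 x t) := by
  have htne : t ≠ 0 := ht.ne'
  set q : ℝ := (d : ℝ) / ((d : ℝ) + 1) with hqdef
  have hq0 : 0 ≤ q := by positivity
  set A : ℝ := c * t * t⁻¹ ^ q with hAdef
  have hA : 0 ≤ A :=
    mul_nonneg (mul_nonneg hc.le ht.le) (Real.rpow_nonneg (inv_nonneg.2 ht.le) q)
  set F : (Fin d → ℝ) → (Fin d → ℝ) → ℝ :=
    fun x y => u0 y + t * gfun c d (t⁻¹ • (x - y)) with hFdef
  have hbdd : ∀ x, BddAbove (hlSet c d u0 x t) := fun x =>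
    bddAbove_hlSet hc ht hmono hdecay x
  have hmemI : ∀ x y : Fin d → ℝ, y ∈ hlI c d u0 x t ↔ y ≤ x ∧ ∀ z, z ≤ x → F x z ≤ F x y :=
    fun x y => mem_hlI_iff htne (hbdd x)
  -- F x x = u0 x
  have hFxx : ∀ x : Fin d → ℝ, F x x = u0 x := by
    intro x
    have hdne : d ≠ 0 := by omega
    have : gfun c d (0 : Fin d → ℝ) = 0 := by
      unfold gfun
      rw [show (∏ i : Fin d, (0 : Fin d → ℝ) i) = 0 by
        simp [Finset.prod_const, hdne]]
      rw [Real.zero_rpow (by positivity)]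
      ring
    simp [hFdef, sub_self, this]
  -- continuity of F (jointly)
  have hFcont : Continuous fun p : (Fin d → ℝ) × (Fin d → ℝ) => F p.1 p.2 := by
    apply Continuous.add (hlip.continuous.comp continuous_snd)
    apply Continuous.mul continuous_const
    exact (gfun_continuous c d).comp (by fun_prop)
  -- bounding box for K
  obtain ⟨R, hR⟩ := hK.isBounded.subset_closedBall 0
  set R' : ℝ := max R 0 with hR'def
  have hxR : ∀ x ∈ K, ‖x‖ ≤ R' := by
    intro x hx
    have := hR hx
    rw [mem_closedBall, dist_zero_right] at this
    exact this.trans (le_max_left _ _)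
  set b : Fin d → ℝ := fun _ => R' with hbdef
  set a : Fin d → ℝ := fun _ => -R' with hadef
  have hxb : ∀ x ∈ K, x ≤ b := by
    intro x hx i
    calc x i ≤ |x i| := le_abs_self _
      _ ≤ ‖x‖ := (Real.norm_eq_abs _) ▸ norm_le_pi_norm x i
      _ ≤ R' := hxR x hx
  have hax : ∀ x ∈ K, a ≤ x := by
    intro x hx i
    have h1 : |x i| ≤ R' := le_trans ((Real.norm_eq_abs _) ▸ norm_le_pi_norm x i) (hxR x hx)
    have := abs_le.1 h1
    simpa [hadef] using this.1
  set m : ℝ := u0 a with hmdef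
  obtain ⟨M, hM0, hM⟩ := hdecay b (2 * A + |m| + 1)
  set M' : ℝ := max (max M R') 1 with hM'def
  -- the union is contained in closedBall 0 M'
  have hsub : (⋃ x ∈ K, hlI c d u0 x t) ⊆ closedBall 0 M' := by
    intro y hy
    simp only [mem_iUnion, exists_prop] at hy
    obtain ⟨x, hxK, hyI⟩ := hy
    obtain ⟨hyx, hmax⟩ := (hmemI x y).1 hyI
    rw [mem_closedBall, dist_zero_right]
    by_contra hcon
    push_neg at hcon
    have hMy : M ≤ ‖y‖ := le_of_lt (lt_of_le_of_lt ((le_max_left M R').trans (le_max_left _ _)) hcon)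
    have hxn : ‖x‖ ≤ ‖y‖ :=
      le_of_lt (lt_of_le_of_lt ((hxR x hxK).trans ((le_max_right M R').trans (le_max_left _ _))) hcon)
    have h1y : 1 ≤ ‖y‖ := le_of_lt (lt_of_le_of_lt (le_max_right _ _) hcon)
    have hu := hM y (le_trans hyx (hxb x hxK)) hMy
    have hkey := key_bound ht hc u0 hyx hxn h1y hu
    have hyq : 1 ≤ ‖y‖ ^ q := by
      calc (1:ℝ) = 1 ^ q := (Real.one_rpow q).symm
        _ ≤ ‖y‖ ^ q := Real.rpow_le_rpow zero_le_one h1y hq0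
    have hFyx : u0 x ≤ F x y := by
      have := hmax x le_rfl
      rwa [hFxx x] at this
    have hma : m ≤ u0 x := hmono (hax x hxK)
    have hFbound : F x y ≤ -(|m| + 1) := by
      have hstep : (2 * A - (2 * A + |m| + 1)) * ‖y‖ ^ q ≤ -(|m| + 1) := by
        have h2 : (2 * A - (2 * A + |m| + 1)) = -(|m| + 1) := by ring
        rw [h2]
        nlinarith [abs_nonneg m]
      exact le_trans hkey hstep
    have : m ≤ -(|m| + 1) := le_trans hma (hFyx.trans hFbound)
    have := neg_abs_le m
    linarith
  -- the union is closed
  have hclosed : IsClosed (⋃ x ∈ K, hlI c d u0 x t) := by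
    apply IsSeqClosed.isClosed
    intro ys y hys hlim
    have hchoice : ∀ n, ∃ x, x ∈ K ∧ ys n ∈ hlI c d u0 x t := by
      intro n
      have := hys n
      simp only [mem_iUnion, exists_prop] at this
      exact this
    choose xs hxsK hxsI using hchoice
    obtain ⟨x, hxK, φ, hφ, hxconv⟩ := hK.tendsto_subseq hxsK
    have hyconv : Filter.Tendsto (fun n => ys (φ n)) Filter.atTop (nhds y) :=
      hlim.comp hφ.tendsto_atTop
    have hprops : ∀ n, ys (φ n) ≤ xs (φ n) ∧ ∀ z, z ≤ xs (φ n) → F (xs (φ n)) z ≤ F (xs (φ n)) (ys (φ n)) :=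
      fun n => (hmemI _ _).1 (hxsI (φ n))
    have hyx : y ≤ x := by
      intro i
      have hyi : Filter.Tendsto (fun n => ys (φ n) i) Filter.atTop (nhds (y i)) :=
        tendsto_pi_nhds.1 hyconv i
      have hxi : Filter.Tendsto (fun n => xs (φ n) i) Filter.atTop (nhds (x i)) :=
        tendsto_pi_nhds.1 hxconv i
      exact le_of_tendsto_of_tendsto' hyi hxi (fun n => (hprops n).1 i)
    have hFy : Filter.Tendsto (fun n => F (xs (φ n)) (ys (φ n))) Filter.atTop (nhds (F x y)) :=
      (hFcont.tendsto (x, y)).comp (hxconv.prodMk_nhds hyconv)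
    suffices hyI : y ∈ hlI c d u0 x t by
      simp only [mem_iUnion, exists_prop]
      exact ⟨x, hxK, hyI⟩
    rw [hmemI]
    refine ⟨hyx, fun z hz => ?_⟩
    set zs : ℕ → Fin d → ℝ := fun n i => min (z i) (xs (φ n) i) with hzsdef
    have hzs_le : ∀ n, zs n ≤ xs (φ n) := fun n i => min_le_right _ _
    have hzconv : Filter.Tendsto zs Filter.atTop (nhds z) := by
      rw [tendsto_pi_nhds]
      intro i
      have hxi : Filter.Tendsto (fun n => xs (φ n) i) Filter.atTop (nhds (x i)) :=
        tendsto_pi_nhds.1 hxconv i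
      have : Filter.Tendsto (fun n => min (z i) (xs (φ n) i)) Filter.atTop
          (nhds (min (z i) (x i))) := tendsto_const_nhds.min hxi
      rwa [min_eq_left (hz i)] at this
    have hFz : Filter.Tendsto (fun n => F (xs (φ n)) (zs n)) Filter.atTop (nhds (F x z)) :=
      (hFcont.tendsto (x, z)).comp (hxconv.prodMk_nhds hzconv)
    exact le_of_tendsto_of_tendsto' hFz hFy (fun n => (hprops n).2 (zs n) (hzs_le n))
  exact (isCompact_closedBall (0 : Fin d → ℝ) M').of_isClosed_subset hclosed hsub

end
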